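/- The direct Hilbert velocity is bounded by the operator norm of the Hamiltonian: if ψ and ξ are unit vectors and H is a bounded self-adjoint operator, then |Im⟨ξ, H ψ⟩| ≤ ‖H‖. Consequently, for the ODE dF/dT = 2√(F(1−F)) ⟨Q⟩_T with ⟨Q⟩_T ≤ Q_max and F(0) = 0, one has F(T) ≤ sin²(min(Q_max T, π/2)), giving the lower bound T_QSL ≥ π/(2 Q_max) on the time to reach F = 1. -/

import Mathlib

open Real
open scoped InnerProductSpace

/-- The direct Hilbert velocity is bounded by the operator norm of the Hamiltonian,
and consequently the ODE dF/dT = 2√(F(1−F))⟨Q⟩_T with ⟨Q⟩_T ≤ Q_max and F(0) = 0 yields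
F(T) ≤ sin²(min(Q_max T, π/2)) and the quantum speed limit bound T_QSL ≥ π/(2Q_max). -/
theorem direct_hilbert_velocity_bound_and_qsl {E : Type*} [NormedAddCommGroup E]
    [InnerProductSpace ℂ E]
    (Hop : E →L[ℂ] E) (hsa : ∀ x y : E, ⟪Hop x, y⟫_ℂ = ⟪x, Hop y⟫_ℂ)
    (ψ ξ : E) (hψ : ‖ψ‖ = 1) (hξ : ‖ξ‖ = 1)
    (Qmax : ℝ) (hQmax : 0 < Qmax)
    (Q F : ℝ → ℝ) (hQ : ∀ T, 0 ≤ T → 0 ≤ Q T ∧ Q T ≤ Qmax)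
    (hF0 : F 0 = 0) (hFrange : ∀ T, 0 ≤ T → F T ∈ Set.Icc (0:ℝ) 1)
    (hF' : ∀ T, 0 ≤ T → HasDerivAt F (2 * Real.sqrt (F T * (1 - F T)) * Q T) T) :
    |(⟪ξ, Hop ψ⟫_ℂ).im| ≤ ‖Hop‖ ∧
      (∀ T, 0 ≤ T → F T ≤ Real.sin (min (Qmax * T) (π / 2)) ^ 2) ∧
      (∀ T, 0 ≤ T → F T = 1 → π / (2 * Qmax) ≤ T) := by
  -- Part 1
  have part1 : |(⟪ξ, Hop ψ⟫_ℂ).im| ≤ ‖Hop‖ := by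
    calc |(⟪ξ, Hop ψ⟫_ℂ).im| ≤ ‖⟪ξ, Hop ψ⟫_ℂ‖ := by
          simpa using Complex.abs_im_le_norm (⟪ξ, Hop ψ⟫_ℂ)
      _ ≤ ‖ξ‖ * ‖Hop ψ‖ := norm_inner_le_norm _ _
      _ ≤ ‖ξ‖ * (‖Hop‖ * ‖ψ‖) := by
          gcongr
          exact Hop.le_opNorm ψ
      _ = ‖Hop‖ := by rw [hψ, hξ]; ring
  -- key comparison lemma with perturbation ε
  have key : ∀ ε : ℝ, 0 < ε → ε < π / 2 → ∀ T, 0 ≤ T →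
      F T ≤ Real.sin (min ((Qmax + ε) * T + ε) (π / 2)) ^ 2 := by
    intro ε hε hεπ T hT
    have hQε : 0 < Qmax + ε := by linarith
    set b : ℝ := (π / 2 - ε) / (Qmax + ε) with hb
    have hb0 : 0 ≤ b := div_nonneg (by linarith) hQε.le
    by_cases hTb : T ≤ b
    · -- in this regime the min is the first argument
      have hmin : min ((Qmax + ε) * T + ε) (π / 2) = (Qmax + ε) * T + ε := by
        apply min_eq_left
        have : (Qmax + ε) * T ≤ (Qmax + ε) * b := by gcongr
        rw [hb, mul_div_cancel₀ _ hQε.ne'] at this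
        linarith
      rw [hmin]
      -- apply the fencing theorem on [0, b]
      set B : ℝ → ℝ := fun t => Real.sin ((Qmax + ε) * t + ε) ^ 2 with hB
      set B' : ℝ → ℝ := fun t =>
        2 * Real.sin ((Qmax + ε) * t + ε) * (Real.cos ((Qmax + ε) * t + ε) * (Qmax + ε)) with hB'
      have hBderiv : ∀ x : ℝ, HasDerivAt B (B' x) x := by
        intro x
        have hu : HasDerivAt (fun t : ℝ => (Qmax + ε) * t + ε) (Qmax + ε) x := by
          simpa using (((hasDerivAt_id x).const_mul (Qmax + ε)).add_const ε)
        have hs : HasDerivAt (fun t : ℝ => Real.sin ((Qmax + ε) * t + ε))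
            (Real.cos ((Qmax + ε) * x + ε) * (Qmax + ε)) x :=
          (Real.hasDerivAt_sin _).comp x hu
        have := hs.fun_pow 2
        simpa [hB, hB', mul_comm, mul_assoc, mul_left_comm] using this
      have hcont : ContinuousOn F (Set.Icc 0 b) := fun x hx =>
        ((hF' x hx.1).continuousAt).continuousWithinAt
      have hfd : ∀ x ∈ Set.Ico (0:ℝ) b,
          HasDerivWithinAt F (2 * Real.sqrt (F x * (1 - F x)) * Q x) (Set.Ici x) x :=
        fun x hx => (hF' x hx.1).hasDerivWithinAt
      have ha : F 0 ≤ B 0 := by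
        rw [hF0, hB]
        positivity
      have bound : ∀ x ∈ Set.Ico (0:ℝ) b, F x = B x →
          2 * Real.sqrt (F x * (1 - F x)) * Q x < B' x := by
        intro x hx hFB
        set θ : ℝ := (Qmax + ε) * x + ε with hθ
        have hθ0 : 0 < θ := by
          have : 0 ≤ (Qmax + ε) * x := mul_nonneg hQε.le hx.1
          simp only [hθ]; linarith
        have hθπ : θ < π / 2 := by
          have : (Qmax + ε) * x < (Qmax + ε) * b := by
            exact (mul_lt_mul_iff_right₀ hQε).2 hx.2
          rw [hb, mul_div_cancel₀ _ hQε.ne'] at this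
          simp only [hθ]; linarith
        have hsin : 0 < Real.sin θ := Real.sin_pos_of_pos_of_lt_pi hθ0 (by linarith [pi_gt_three])
        have hcos : 0 < Real.cos θ := Real.cos_pos_of_mem_Ioo ⟨by linarith [pi_div_two_pos], hθπ⟩
        have hsq : Real.sqrt (F x * (1 - F x)) = Real.sin θ * Real.cos θ := by
          have h1 : F x * (1 - F x) = (Real.sin θ * Real.cos θ) ^ 2 := by
            rw [hFB]
            have := Real.sin_sq_add_cos_sq θ
            simp only [hB]
            nlinarith
          rw [h1, Real.sqrt_sq (by positivity)]
        have hQx := hQ x hx.1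
        calc 2 * Real.sqrt (F x * (1 - F x)) * Q x
            = 2 * (Real.sin θ * Real.cos θ) * Q x := by rw [hsq]
          _ ≤ 2 * (Real.sin θ * Real.cos θ) * Qmax :=
              mul_le_mul_of_nonneg_left hQx.2 (by positivity)
          _ < 2 * (Real.sin θ * Real.cos θ) * (Qmax + ε) := by
              have h2 : 0 < 2 * (Real.sin θ * Real.cos θ) := by positivity
              exact (mul_lt_mul_iff_right₀ h2).2 (by linarith)
          _ = B' x := by simp only [hB', hθ]; try ring
      have := image_le_of_deriv_right_lt_deriv_boundary hcont hfd ha hBderiv bound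
        (x := T) ⟨hT, hTb⟩
      simpa [hB] using this
    · -- beyond b the bound is 1
      push_neg at hTb
      have hmin : min ((Qmax + ε) * T + ε) (π / 2) = π / 2 := by
        apply min_eq_right
        have : (Qmax + ε) * b ≤ (Qmax + ε) * T :=
          mul_le_mul_of_nonneg_left hTb.le hQε.le
        rw [hb, mul_div_cancel₀ _ hQε.ne'] at this
        linarith
      rw [hmin, Real.sin_pi_div_two]
      simpa using (hFrange T hT).2
  -- Part 2 by taking ε → 0⁺
  have part2 : ∀ T, 0 ≤ T → F T ≤ Real.sin (min (Qmax * T) (π / 2)) ^ 2 := by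
    intro T hT
    have hcont : Continuous (fun ε : ℝ =>
        Real.sin (min ((Qmax + ε) * T + ε) (π / 2)) ^ 2) := by fun_prop
    have htend : Filter.Tendsto (fun ε : ℝ =>
        Real.sin (min ((Qmax + ε) * T + ε) (π / 2)) ^ 2) (nhdsWithin 0 (Set.Ioi 0))
        (nhds (Real.sin (min (Qmax * T) (π / 2)) ^ 2)) := by
      exact ((hcont.tendsto' 0 _ (by norm_num)).mono_left nhdsWithin_le_nhds)
    refine ge_of_tendsto htend ?_
    filter_upwards [Ioo_mem_nhdsGT_of_mem
      (Set.mem_Ico.2 ⟨le_refl (0:ℝ), pi_div_two_pos⟩)] with ε hε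
    exact key ε hε.1 hε.2 T hT
  refine ⟨part1, part2, ?_⟩
  -- Part 3
  intro T hT hFT
  by_contra hlt
  push_neg at hlt
  have hTQ : Qmax * T < π / 2 := by
    have h := (mul_lt_mul_iff_right₀ hQmax).2 hlt
    have h2 : Qmax * (π / (2 * Qmax)) = π / 2 := by
      field_simp
    linarith
  have hmin : min (Qmax * T) (π / 2) = Qmax * T := min_eq_left hTQ.le
  have h2 := part2 T hT
  rw [hFT, hmin] at h2
  have hs1 : Real.sin (Qmax * T) < 1 := by
    have := Real.sin_lt_sin_of_lt_of_le_pi_div_two (x := Qmax * T) (y := π / 2)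
      (by linarith [mul_nonneg hQmax.le hT, pi_div_two_pos]) le_rfl hTQ
    simpa using this
  have hs0 : 0 ≤ Real.sin (Qmax * T) :=
    Real.sin_nonneg_of_nonneg_of_le_pi (mul_nonneg hQmax.le hT) (by linarith [pi_gt_three])
  nlinarith
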